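/- Let k ≥ 3 and A = {1, -2, 3, 4, ..., k} ⊆ ℤ (i.e., the set {1,...,k} with 2 replaced by -2). Then the set of sums of nonempty proper-size subsets of A of size between 1 and k-1 equals {-2, -1} ∪ [1, k(k+1)/2 - 5] ∪ {k(k+1)/2 - 3, k(k+1)/2 - 2}, and has cardinality k(k+1)/2 - 1. -/
import Mathlib

private lemma insert_sum_image (a : ℤ) (s : Finset ℤ) (ha : a ∉ s) :
    ((insert a s).powerset.image fun S => S.sum id) =
      (s.powerset.image fun S => S.sum id) ∪
        ((s.powerset.image fun S => S.sum id)).image (fun x => x + a) := by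
  rw [Finset.powerset_insert, Finset.image_union, Finset.image_image, Finset.image_image]
  congr 1
  apply Finset.image_congr
  intro T hT
  simp only [Finset.mem_coe, Finset.mem_powerset] at hT
  simp only [Function.comp_apply]
  rw [Finset.sum_insert (fun h => ha (hT h))]
  simp [add_comm]

private lemma icc_insert (b : ℤ) (h : 0 ≤ b) :
    Finset.Icc (1:ℤ) (b+1) = insert (b+1) (Finset.Icc 1 b) := by
  ext x; simp only [Finset.mem_Icc, Finset.mem_insert]; omega

private lemma twice_div (k : ℕ) : 2 * ((k * (k + 1) : ℤ) / 2) = (k:ℤ) * ((k:ℤ) + 1) := by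
  have h : (2:ℤ) ∣ (k:ℤ) * ((k:ℤ) + 1) := (Int.even_mul_succ_self (k:ℤ)).two_dvd
  rw [Int.mul_ediv_cancel' h]

private lemma sum_Icc_id (k : ℕ) : 2 * ((Finset.Icc (1:ℤ) (k:ℤ)).sum id) = (k:ℤ) * ((k:ℤ) + 1) := by
  induction k with
  | zero => simp
  | succ k IH =>
      rw [Nat.cast_add_one, icc_insert (k:ℤ) (by positivity),
        Finset.sum_insert (by simp only [Finset.mem_Icc]; omega)]
      push_cast at IH
      simp only [id_eq]
      simp only [id_eq] at IH
      ring_nf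
      ring_nf at IH
      linarith [IH]

private lemma Bsums (k : ℕ) (hk : 5 ≤ k) :
    (((Finset.Icc (1:ℤ) k).erase 2).powerset.image fun S => S.sum id) =
      ({0, 1} : Finset ℤ) ∪ Finset.Icc 3 ((k * (k + 1) : ℤ) / 2 - 5) ∪
        {(k * (k + 1) : ℤ) / 2 - 3, (k * (k + 1) : ℤ) / 2 - 2} := by
  induction k, hk using Nat.le_induction with
  | base => decide
  | succ k hk IH =>
      have hk5 : (5:ℤ) ≤ (k:ℤ) := by exact_mod_cast hk
      have h2s := twice_div k
      have e1 : ((k+1 : ℕ) * ((k+1 : ℕ) + 1) : ℤ) / 2 = (k * (k + 1) : ℤ) / 2 + ((k:ℤ) + 1) := by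
        rw [show ((k+1 : ℕ) * ((k+1 : ℕ) + 1) : ℤ) = (k * (k + 1) : ℤ) + ((k:ℤ)+1) * 2 by
          push_cast; ring]
        rw [Int.add_mul_ediv_right _ _ two_ne_zero]
      have h8 : (k:ℤ) + 8 ≤ (k * (k + 1) : ℤ) / 2 := by nlinarith
      rw [e1]
      rw [show ((k+1 : ℕ) : ℤ) = (k:ℤ) + 1 by push_cast; ring,
        icc_insert (k:ℤ) (by positivity),
        Finset.erase_insert_of_ne (by intro h; omega : ((k:ℤ)+1) ≠ 2),
        insert_sum_image _ _ (by simp only [Finset.mem_erase, Finset.mem_Icc]; omega),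
        IH]
      obtain ⟨s, hs⟩ : ∃ s : ℤ, (k * (k + 1) : ℤ) / 2 = s := ⟨_, rfl⟩
      rw [hs] at h8 ⊢
      ext x
      simp only [Finset.mem_union, Finset.mem_insert, Finset.mem_singleton, Finset.mem_Icc,
        Finset.mem_image]
      constructor
      · rintro ((h | h) | ⟨y, hy, rfl⟩)
        · omega
        · omega
        · omega
      · intro h
        by_cases hcase : (x = 0 ∨ x = 1 ∨ (3 ≤ x ∧ x ≤ s - 5) ∨ x = s - 3 ∨ x = s - 2)
        · left; omega
        · right
          refine ⟨x - ((k:ℤ)+1), ?_, by ring⟩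
          omega

theorem sigma_one_one_counterexample_int (k : ℕ) (hk : 3 ≤ k) :
    ((((insert (-2 : ℤ) ((Finset.Icc (1 : ℤ) k).erase 2)).powerset.filter
          fun S => 1 ≤ S.card ∧ S.card ≤ k - 1).image fun S => S.sum id) =
        ({-2, -1} : Finset ℤ) ∪ Finset.Icc 1 ((k * (k + 1) : ℤ) / 2 - 5) ∪
          {(k * (k + 1) : ℤ) / 2 - 3, (k * (k + 1) : ℤ) / 2 - 2}) ∧
    (((((insert (-2 : ℤ) ((Finset.Icc (1 : ℤ) k).erase 2)).powerset.filter
          fun S => 1 ≤ S.card ∧ S.card ≤ k - 1).image fun S => S.sum id).card : ℤ) =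
        (k * (k + 1) : ℤ) / 2 - 1) := by
  by_cases hlt : k < 5
  · interval_cases k
    · exact ⟨by decide, by decide⟩
    · exact ⟨by decide, by decide⟩
  push_neg at hlt
  have hk5 : (5:ℤ) ≤ (k:ℤ) := by exact_mod_cast hlt
  set B : Finset ℤ := (Finset.Icc (1 : ℤ) k).erase 2 with hBdef
  have h2s := twice_div k
  have h8 : (k:ℤ) + 8 ≤ (k * (k + 1) : ℤ) / 2 := by nlinarith
  have hBsum : B.sum id = (k * (k + 1) : ℤ) / 2 - 2 := by
    rw [hBdef, Finset.sum_erase_eq_sub (by simp only [Finset.mem_Icc]; omega : (2:ℤ) ∈ Finset.Icc (1:ℤ) k)]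
    have := sum_Icc_id k
    simp only [id_eq] at this ⊢
    omega
  have hQ := Bsums k hlt
  obtain ⟨s, hs⟩ : ∃ s : ℤ, (k * (k + 1) : ℤ) / 2 = s := ⟨_, rfl⟩
  rw [hs] at h8 hQ hBsum ⊢
  have hBcard : B.card = k - 1 := by
    rw [hBdef, Finset.card_erase_of_mem (by simp only [Finset.mem_Icc]; omega), Int.card_Icc]
    omega
  have hBge : ∀ x ∈ B, (1:ℤ) ≤ x := by
    intro x hx
    rw [hBdef, Finset.mem_erase, Finset.mem_Icc] at hx
    omega
  have hpos : ∀ T : Finset ℤ, T ⊆ B → (T.card : ℤ) ≤ T.sum id := by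
    intro T hT
    have := Finset.card_nsmul_le_sum T id 1 (fun x hx => hBge x (hT hx))
    simpa using this
  have hmem : ∀ x : ℤ, (∃ T : Finset ℤ, T ⊆ B ∧ T.sum id = x) ↔
      (x = 0 ∨ x = 1 ∨ (3 ≤ x ∧ x ≤ s - 5) ∨ x = s - 3 ∨ x = s - 2) := by
    intro x
    constructor
    · rintro ⟨T, hT, rfl⟩
      have hx : T.sum id ∈ ({0, 1} : Finset ℤ) ∪ Finset.Icc 3 (s - 5) ∪ {s - 3, s - 2} := by
        rw [← hQ]
        exact Finset.mem_image_of_mem _ (Finset.mem_powerset.mpr hT)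
      simp only [Finset.mem_union, Finset.mem_insert, Finset.mem_singleton, Finset.mem_Icc] at hx
      tauto
    · intro h
      have hx : x ∈ ({0, 1} : Finset ℤ) ∪ Finset.Icc 3 (s - 5) ∪ {s - 3, s - 2} := by
        simp only [Finset.mem_union, Finset.mem_insert, Finset.mem_singleton, Finset.mem_Icc]
        tauto
      rw [← hQ, Finset.mem_image] at hx
      obtain ⟨T, hT, hsum⟩ := hx
      exact ⟨T, Finset.mem_powerset.mp hT, hsum⟩
  have hfull : ∀ T : Finset ℤ, T ⊆ B → T ≠ B → T.sum id ≤ s - 3 := by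
    intro T hT hne
    have hsd : (B \ T).sum id + T.sum id = B.sum id := Finset.sum_sdiff hT
    have hne' : (B \ T).Nonempty := by
      rw [Finset.sdiff_nonempty]
      exact fun h => hne (Finset.Subset.antisymm hT h)
    have h1 : (1:ℤ) ≤ ((B \ T).card : ℤ) := by
      have := Finset.card_pos.mpr hne'
      exact_mod_cast this
    have h2 := hpos (B \ T) (Finset.sdiff_subset)
    omega
  have part1 : (((insert (-2 : ℤ) B).powerset.filter
          fun S => 1 ≤ S.card ∧ S.card ≤ k - 1).image fun S => S.sum id) =
        ({-2, -1} : Finset ℤ) ∪ Finset.Icc 1 (s - 5) ∪ {s - 3, s - 2} := by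
    ext x
    simp only [Finset.mem_union, Finset.mem_insert, Finset.mem_singleton, Finset.mem_Icc]
    rw [Finset.mem_image]
    constructor
    · rintro ⟨S, hS, rfl⟩
      rw [Finset.mem_filter, Finset.mem_powerset] at hS
      obtain ⟨hSsub, hc1, hc2⟩ := hS
      by_cases hm : (-2:ℤ) ∈ S
      · set T := S.erase (-2) with hTdef
        have hTsub : T ⊆ B := by
          intro y hy
          rw [hTdef, Finset.mem_erase] at hy
          rcases Finset.mem_insert.mp (hSsub hy.2) with h | h
          · exact absurd h hy.1
          · exact h
        have hsum2 : (-2:ℤ) + T.sum id = S.sum id := Finset.add_sum_erase _ id hm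
        have hTmem : (T.sum id = 0 ∨ T.sum id = 1 ∨ (3 ≤ T.sum id ∧ T.sum id ≤ s - 5) ∨
            T.sum id = s - 3 ∨ T.sum id = s - 2) := (hmem _).mp ⟨T, hTsub, rfl⟩
        have hTne : T ≠ B := by
          intro hTB
          have : S.card = k := by
            have h1 : T.card + 1 = S.card := Finset.card_erase_add_one hm
            rw [hTB, hBcard] at h1
            omega
          omega
        have := hfull T hTsub hTne
        omega
      · have hTsub : S ⊆ B := by
          intro y hy
          rcases Finset.mem_insert.mp (hSsub hy) with h | h
          · exact absurd (h ▸ hy) hm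
          · exact h
        have hTmem := (hmem _).mp ⟨S, hTsub, rfl⟩
        have hcard := hpos S hTsub
        have : (1:ℤ) ≤ (S.card : ℤ) := by exact_mod_cast hc1
        omega
    · intro hx
      have hone : (1:ℤ) ∈ B := by
        rw [hBdef, Finset.mem_erase, Finset.mem_Icc]
        omega
      have hnegB : (-2:ℤ) ∉ B := by
        rw [hBdef, Finset.mem_erase, Finset.mem_Icc]
        omega
      rcases hx with ((h | h) | ⟨h1, h2⟩) | (h | h)
      · -- x = -2
        refine ⟨{-2}, ?_, by simp [h]⟩
        rw [Finset.mem_filter, Finset.mem_powerset]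
        refine ⟨by simp, by simp, by simp; omega⟩
      · -- x = -1
        refine ⟨{-2, 1}, ?_, by rw [Finset.sum_insert (by norm_num)]; simp [h]⟩
        rw [Finset.mem_filter, Finset.mem_powerset]
        refine ⟨?_, ?_, ?_⟩
        · intro y hy
          rcases Finset.mem_insert.mp hy with h' | h'
          · exact h' ▸ Finset.mem_insert_self _ _
          · rw [Finset.mem_singleton] at h'
            exact h' ▸ Finset.mem_insert_of_mem hone
        · rw [Finset.card_insert_of_notMem (by norm_num)]; simp
        · rw [Finset.card_insert_of_notMem (by norm_num)]; simp; omega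
      · -- 1 ≤ x ≤ s - 5
        by_cases hx2 : x = 2
        · obtain ⟨T, hTsub, hTsum⟩ := (hmem 4).mpr (by omega)
          have hTneB : T ≠ B := by
            intro hTB
            rw [hTB, hBsum] at hTsum
            omega
          have hnegT : (-2:ℤ) ∉ T := fun h => hnegB (hTsub h)
          refine ⟨insert (-2) T, ?_, ?_⟩
          · rw [Finset.mem_filter, Finset.mem_powerset]
            refine ⟨Finset.insert_subset_insert _ hTsub, ?_, ?_⟩
            · simp
            · rw [Finset.card_insert_of_notMem hnegT]
              have := Finset.card_lt_card (Finset.ssubset_iff_subset_ne.mpr ⟨hTsub, hTneB⟩)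
              omega
          · rw [Finset.sum_insert hnegT, hTsum]
            simp [hx2]
        · obtain ⟨T, hTsub, hTsum⟩ := (hmem x).mpr (by omega)
          have hTne : T.Nonempty := by
            rw [Finset.nonempty_iff_ne_empty]
            rintro rfl
            simp at hTsum
            omega
          refine ⟨T, ?_, hTsum⟩
          rw [Finset.mem_filter, Finset.mem_powerset]
          refine ⟨hTsub.trans (Finset.subset_insert _ _), Finset.card_pos.mpr hTne, ?_⟩
          have := Finset.card_le_card hTsub
          omega
      · -- x = s - 3
        obtain ⟨T, hTsub, hTsum⟩ := (hmem x).mpr (by omega)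
        have hTne : T.Nonempty := by
          rw [Finset.nonempty_iff_ne_empty]
          rintro rfl
          simp at hTsum
          omega
        refine ⟨T, ?_, hTsum⟩
        rw [Finset.mem_filter, Finset.mem_powerset]
        refine ⟨hTsub.trans (Finset.subset_insert _ _), Finset.card_pos.mpr hTne, ?_⟩
        have := Finset.card_le_card hTsub
        omega
      · -- x = s - 2
        obtain ⟨T, hTsub, hTsum⟩ := (hmem x).mpr (by omega)
        have hTne : T.Nonempty := by
          rw [Finset.nonempty_iff_ne_empty]
          rintro rfl
          simp at hTsum
          omega
        refine ⟨T, ?_, hTsum⟩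
        rw [Finset.mem_filter, Finset.mem_powerset]
        refine ⟨hTsub.trans (Finset.subset_insert _ _), Finset.card_pos.mpr hTne, ?_⟩
        have := Finset.card_le_card hTsub
        omega
  refine ⟨part1, ?_⟩
  rw [part1]
  rw [Finset.card_union_of_disjoint, Finset.card_union_of_disjoint]
  · rw [Int.card_Icc]
    have : ({-2, -1} : Finset ℤ).card = 2 := by decide
    rw [this]
    have h2 : ({s - 3, s - 2} : Finset ℤ).card = 2 := by
      rw [Finset.card_insert_of_notMem (by simp), Finset.card_singleton]
    rw [h2]
    push_cast
    omega
  · rw [Finset.disjoint_left]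
    intro a ha
    simp only [Finset.mem_insert, Finset.mem_singleton] at ha ⊢
    simp only [Finset.mem_Icc]
    omega
  · rw [Finset.disjoint_left]
    intro a ha
    simp only [Finset.mem_union, Finset.mem_insert, Finset.mem_singleton, Finset.mem_Icc] at ha
    simp only [Finset.mem_insert, Finset.mem_singleton]
    omega
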